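/- Let Ĝ = (V, ŵ) be a weighted graph with total edge weight Ŵ = Σ_e ŵ_e > 0, let Y be a real number with 0 ≤ Y ≤ Ŵ, and let Ḡ = (V, w̄) be the rescaled graph with w̄ = ((Ŵ + Y)/Ŵ) · ŵ. Then for all disjoint subsets S, T ⊆ V: Cut_△^{(Ĝ)}(S,T) ≤ Cut_△^{(Ḡ)}(S,T) ≤ Cut_△^{(Ĝ)}(S,T) + 7 · Y · ℓ₃(Ḡ). -/

import Mathlib

open Finset
set_option linter.unusedSectionVars false
set_option maxHeartbeats 1000000

variable {V : Type*} [Fintype V] [DecidableEq V]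

/-- The weight of a 3-element vertex subset: the product of its edge weights. -/
noncomputable def triWeight (w : Sym2 V → ℝ) (t : Finset V) : ℝ :=
  ∏ e ∈ t.sym2.filter fun e => ¬ e.IsDiag, w e

/-- Triangle-motif size of the cut `(S, T)`. -/
noncomputable def cutTri (w : Sym2 V → ℝ) (S T : Finset V) : ℝ :=
  ∑ t ∈ (Finset.univ.powersetCard 3).filter
      (fun t => (t ∩ S).Nonempty ∧ (t ∩ T).Nonempty),
    triWeight w t

/-- Total edge weight. -/
noncomputable def totalWeight (w : Sym2 V → ℝ) : ℝ :=
  ∑ e ∈ Finset.univ.filter fun e : Sym2 V => ¬ e.IsDiag, w e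

/-- Local sensitivity of triangle-motif cuts. -/
noncomputable def ell3 (w : Sym2 V → ℝ) : ℝ :=
  ⨆ p : V × V,
    if p.1 ≠ p.2 then ∑ s ∈ ({p.1, p.2} : Finset V)ᶜ, w s(p.1, s) * w s(p.2, s) else 0

lemma triWeight_nonneg {w : Sym2 V → ℝ} (hw : ∀ e, 0 ≤ w e) (t : Finset V) :
    0 ≤ triWeight w t :=
  Finset.prod_nonneg fun e _ => hw e

lemma cutTri_nonneg {w : Sym2 V → ℝ} (hw : ∀ e, 0 ≤ w e) (S T : Finset V) :
    0 ≤ cutTri w S T :=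
  Finset.sum_nonneg fun t _ => triWeight_nonneg hw t

lemma edgeSet_eq {a b c : V} (hab : a ≠ b) (hac : a ≠ c) (hbc : b ≠ c) :
    ({a,b,c} : Finset V).sym2.filter (fun e => ¬ e.IsDiag)
      = {s(a,b), s(a,c), s(b,c)} := by
  ext e
  induction e with
  | _ x y =>
    simp only [Finset.mem_filter, Finset.mk_mem_sym2_iff, Finset.mem_insert,
      Finset.mem_singleton, Sym2.isDiag_iff_proj_eq, Sym2.eq_iff]
    constructor
    · rintro ⟨⟨hx | hx | hx, hy | hy | hy⟩, hne⟩ <;> subst hx <;> subst hy <;> tauto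
    · rintro ((⟨hx, hy⟩ | ⟨hx, hy⟩) | (⟨hx, hy⟩ | ⟨hx, hy⟩) | (⟨hx, hy⟩ | ⟨hx, hy⟩)) <;>
        subst hx <;> subst hy <;> tauto

lemma triWeight_eq (w : Sym2 V → ℝ) {a b c : V} (hab : a ≠ b) (hac : a ≠ c) (hbc : b ≠ c) :
    triWeight w {a,b,c} = w s(a,b) * w s(a,c) * w s(b,c) := by
  rw [triWeight, edgeSet_eq hab hac hbc]
  rw [Finset.prod_insert (by simp [Sym2.eq_iff]; tauto),
    Finset.prod_insert (by simp [Sym2.eq_iff]; tauto), Finset.prod_singleton, mul_assoc]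

lemma exists_sorted_triple [LinearOrder V] {t : Finset V} (ht : t.card = 3) :
    ∃ a b c : V, a < b ∧ b < c ∧ t.sort (· ≤ ·) = [a, b, c] ∧ t = {a,b,c} := by
  have hl : (t.sort (· ≤ ·)).length = 3 := by rw [Finset.length_sort]; exact ht
  obtain ⟨a, b, c, habc⟩ := List.length_eq_three.mp hl
  have hs := t.sortedLT_sort.pairwise
  rw [habc] at hs
  simp only [List.pairwise_cons, List.mem_cons, List.mem_singleton, List.pairwise_singleton,
    List.not_mem_nil] at hs
  refine ⟨a, b, c, hs.1 b (Or.inl rfl), hs.2.1 c (Or.inl rfl), habc, ?_⟩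
  have := t.sort_toFinset (· ≤ ·)
  rw [habc] at this
  simp only [List.toFinset_cons, List.toFinset_nil, insert_empty_eq] at this
  exact this.symm

lemma triple_card [LinearOrder V] {a b c : V} (h1 : a < b) (h2 : b < c) :
    ({a,b,c} : Finset V).card = 3 :=
  Finset.card_eq_three.mpr ⟨a, b, c, h1.ne, (h1.trans h2).ne, h2.ne, rfl⟩

lemma triple_eq [LinearOrder V] {a b c a' b' c' : V} (h1 : a < b) (h2 : b < c)
    (h3 : a' < b') (h4 : b' < c') (h : ({a,b,c} : Finset V) = {a',b',c'}) :
    a = a' ∧ b = b' ∧ c = c' := by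
  have ma : ∀ x, x ∈ ({a,b,c} : Finset V) → a ≤ x := by
    intro x hx; simp only [Finset.mem_insert, Finset.mem_singleton] at hx
    rcases hx with rfl | rfl | rfl
    exacts [le_refl _, h1.le, (h1.trans h2).le]
  have ma' : ∀ x, x ∈ ({a',b',c'} : Finset V) → a' ≤ x := by
    intro x hx; simp only [Finset.mem_insert, Finset.mem_singleton] at hx
    rcases hx with rfl | rfl | rfl
    exacts [le_refl _, h3.le, (h3.trans h4).le]
  have mc : ∀ x, x ∈ ({a,b,c} : Finset V) → x ≤ c := by
    intro x hx; simp only [Finset.mem_insert, Finset.mem_singleton] at hx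
    rcases hx with rfl | rfl | rfl
    exacts [(h1.trans h2).le, h2.le, le_refl _]
  have mc' : ∀ x, x ∈ ({a',b',c'} : Finset V) → x ≤ c' := by
    intro x hx; simp only [Finset.mem_insert, Finset.mem_singleton] at hx
    rcases hx with rfl | rfl | rfl
    exacts [(h3.trans h4).le, h4.le, le_refl _]
  have haa : a = a' := le_antisymm
    (ma a' (h ▸ (by simp))) (ma' a (h.symm ▸ (by simp)))
  have hcc : c = c' := le_antisymm
    (mc' c (h.symm ▸ (by simp))) (mc c' (h ▸ (by simp)))
  refine ⟨haa, ?_, hcc⟩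
  have hb : b ∈ ({a',b',c'} : Finset V) := h ▸ (by simp)
  simp only [Finset.mem_insert, Finset.mem_singleton] at hb
  rcases hb with rfl | rfl | rfl
  · exact absurd (haa ▸ h1) (lt_irrefl _)
  · rfl
  · exact absurd (hcc ▸ h2) (lt_irrefl _)

lemma sum_pairs [LinearOrder V] (w : Sym2 V → ℝ) :
    ∑ p ∈ Finset.univ.filter (fun p : V × V => p.1 < p.2), w s(p.1, p.2) = totalWeight w := by
  rw [totalWeight]
  refine Finset.sum_nbij' (fun p => s(p.1, p.2))
    (fun e => ((Sym2.sortEquiv e).1.1, (Sym2.sortEquiv e).1.2)) ?_ ?_ ?_ ?_ ?_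
  · rintro ⟨x, y⟩ hp
    simp only [Finset.mem_filter, Finset.mem_univ, true_and] at hp ⊢
    simp [Sym2.isDiag_iff_proj_eq, hp.ne]
  · intro e he
    simp only [Finset.mem_filter, Finset.mem_univ, true_and] at he ⊢
    induction e with
    | _ x y =>
      have hne : ¬ (s(x,y)).IsDiag := he
      rw [Sym2.isDiag_iff_proj_eq] at hne
      rcases lt_or_gt_of_ne hne with h1 | h1
      · simpa [Sym2.sortEquiv, inf_eq_left.mpr h1.le, sup_eq_right.mpr h1.le] using h1
      · simpa [Sym2.sortEquiv, inf_eq_right.mpr h1.le, sup_eq_left.mpr h1.le] using h1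
  · rintro ⟨x, y⟩ hp
    simp only [Finset.mem_filter, Finset.mem_univ, true_and] at hp
    simp [Sym2.sortEquiv, inf_eq_left.mpr hp.le, sup_eq_right.mpr hp.le]
  · intro e he
    induction e with
    | _ x y =>
      show s((s(x,y)).inf, (s(x,y)).sup) = s(x, y)
      simp only [Sym2.inf_mk, Sym2.sup_mk]
      rcases le_total x y with h | h
      · simp [inf_eq_left.mpr h, sup_eq_right.mpr h]
      · rw [inf_eq_right.mpr h, sup_eq_left.mpr h, Sym2.eq_swap]
  · rintro ⟨x, y⟩ hp; rfl

lemma pairSum_le_ell3 {w : Sym2 V → ℝ} {a b : V} (hab : a ≠ b) :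
    ∑ s ∈ ({a, b} : Finset V)ᶜ, w s(a, s) * w s(b, s) ≤ ell3 w := by
  have hb : BddAbove (Set.range fun p : V × V =>
      if p.1 ≠ p.2 then ∑ s ∈ ({p.1, p.2} : Finset V)ᶜ, w s(p.1, s) * w s(p.2, s) else 0) :=
    Set.Finite.bddAbove (Set.finite_range _)
  calc ∑ s ∈ ({a, b} : Finset V)ᶜ, w s(a, s) * w s(b, s)
      = (fun p : V × V => if p.1 ≠ p.2 then
          ∑ s ∈ ({p.1, p.2} : Finset V)ᶜ, w s(p.1, s) * w s(p.2, s) else 0) (a, b) := by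
        simp [hab]
    _ ≤ ell3 w := le_ciSup hb (a, b)

lemma ell3_nonneg [Nonempty V] (w : Sym2 V → ℝ) : 0 ≤ ell3 w := by
  obtain ⟨v⟩ := ‹Nonempty V›
  have hb : BddAbove (Set.range fun p : V × V =>
      if p.1 ≠ p.2 then ∑ s ∈ ({p.1, p.2} : Finset V)ᶜ, w s(p.1, s) * w s(p.2, s) else 0) :=
    Set.Finite.bddAbove (Set.finite_range _)
  calc (0:ℝ) = (fun p : V × V => if p.1 ≠ p.2 then
          ∑ s ∈ ({p.1, p.2} : Finset V)ᶜ, w s(p.1, s) * w s(p.2, s) else 0) (v, v) := by simp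
    _ ≤ ell3 w := le_ciSup hb (v, v)

/-- Key counting bound: the total triangle weight is at most `totalWeight w * L`
where `L` bounds all pair sums. -/
lemma sum_triWeight_le [LinearOrder V] {w : Sym2 V → ℝ} (hw : ∀ e, 0 ≤ w e) {L : ℝ}
    (hL0 : 0 ≤ L)
    (hL : ∀ a b : V, a ≠ b → ∑ s ∈ ({a, b} : Finset V)ᶜ, w s(a, s) * w s(b, s) ≤ L) :
    ∑ t ∈ Finset.univ.powersetCard 3, triWeight w t ≤ totalWeight w * L := by
  classical
  rcases isEmpty_or_nonempty V with hV | hV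
  · have h1 : (Finset.univ : Finset V).powersetCard 3 = ∅ := by
      apply Finset.eq_empty_of_forall_notMem
      intro t ht
      rw [Finset.mem_powersetCard_univ] at ht
      obtain ⟨x, hx⟩ := Finset.card_pos.mp (by omega : 0 < t.card)
      exact hV.false x
    have h2 : totalWeight w = 0 := by
      rw [totalWeight]
      apply Finset.sum_eq_zero
      intro e he
      induction e with
      | _ x y => exact (hV.false x).elim
    rw [h1, h2]; simp
  obtain ⟨d⟩ := hV
  set f : (V × V) × V → ℝ :=
    fun q => w s(q.1.1, q.1.2) * w s(q.1.1, q.2) * w s(q.1.2, q.2) with hf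
  have step1 : ∑ t ∈ Finset.univ.powersetCard 3, triWeight w t
      = ∑ q ∈ Finset.univ.filter (fun q : (V × V) × V => q.1.1 < q.1.2 ∧ q.1.2 < q.2), f q := by
    refine Finset.sum_nbij'
      (fun t => (((t.sort (· ≤ ·)).getD 0 d, (t.sort (· ≤ ·)).getD 1 d), (t.sort (· ≤ ·)).getD 2 d))
      (fun q => {q.1.1, q.1.2, q.2}) ?_ ?_ ?_ ?_ ?_
    · intro t ht
      rw [Finset.mem_powersetCard_univ] at ht
      obtain ⟨a, b, c, h1, h2, hsort, -⟩ := exists_sorted_triple ht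
      simp [hsort, h1, h2]
    · rintro ⟨⟨a, b⟩, c⟩ hq
      simp only [Finset.mem_filter, Finset.mem_univ, true_and] at hq
      rw [Finset.mem_powersetCard_univ]
      exact triple_card hq.1 hq.2
    · intro t ht
      rw [Finset.mem_powersetCard_univ] at ht
      obtain ⟨a, b, c, h1, h2, hsort, hset⟩ := exists_sorted_triple ht
      rw [hset] at hsort
      simp [hsort, hset]
    · rintro ⟨⟨a, b⟩, c⟩ hq
      simp only [Finset.mem_filter, Finset.mem_univ, true_and] at hq
      have hcard := triple_card hq.1 hq.2
      obtain ⟨a', b', c', h1, h2, hsort, hset⟩ := exists_sorted_triple hcard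
      obtain ⟨ha, hb, hc⟩ := triple_eq h1 h2 hq.1 hq.2 hset.symm
      simp [hsort, ha, hb, hc]
    · intro t ht
      rw [Finset.mem_powersetCard_univ] at ht
      obtain ⟨a, b, c, h1, h2, hsort, hset⟩ := exists_sorted_triple ht
      rw [hset, triWeight_eq w h1.ne (h1.trans h2).ne h2.ne]
      rw [hset] at hsort
      simp [hf, hsort]
  rw [step1]
  have step2 : ∀ p : V × V, p.1 < p.2 →
      ∑ c ∈ Finset.univ.filter (fun c => p.2 < c), f (p, c) ≤ w s(p.1, p.2) * L := by
    rintro ⟨a, b⟩ hab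
    have hsub : Finset.univ.filter (fun c => b < c) ⊆ ({a, b} : Finset V)ᶜ := by
      intro c hc
      simp only [Finset.mem_filter, Finset.mem_univ, true_and] at hc
      simp only [Finset.mem_compl, Finset.mem_insert, Finset.mem_singleton]
      push_neg
      exact ⟨fun h => absurd (h ▸ (hab.trans hc)) (lt_irrefl _),
        fun h => absurd (h ▸ hc) (lt_irrefl _)⟩
    calc ∑ c ∈ Finset.univ.filter (fun c => b < c), f ((a, b), c)
        = w s(a, b) * ∑ c ∈ Finset.univ.filter (fun c => b < c), w s(a, c) * w s(b, c) := by
          rw [Finset.mul_sum]; exact Finset.sum_congr rfl fun c _ => by simp [hf]; ring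
      _ ≤ w s(a, b) * ∑ c ∈ ({a, b} : Finset V)ᶜ, w s(a, c) * w s(b, c) := by
          apply mul_le_mul_of_nonneg_left _ (hw _)
          exact Finset.sum_le_sum_of_subset_of_nonneg hsub
            (fun c _ _ => mul_nonneg (hw _) (hw _))
      _ ≤ w s(a, b) * L := mul_le_mul_of_nonneg_left (hL a b hab.ne) (hw _)
  calc ∑ q ∈ Finset.univ.filter (fun q : (V × V) × V => q.1.1 < q.1.2 ∧ q.1.2 < q.2), f q
      = ∑ p : V × V, if p.1 < p.2 then
          ∑ c ∈ Finset.univ.filter (fun c => p.2 < c), f (p, c) else 0 := by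
        rw [Finset.sum_filter, Fintype.sum_prod_type]
        refine Finset.sum_congr rfl fun p _ => ?_
        by_cases hp : p.1 < p.2
        · simp only [hp, if_true, true_and, Finset.sum_filter]
        · simp [hp]
    _ ≤ ∑ p : V × V, (if p.1 < p.2 then w s(p.1, p.2) else 0) * L := by
        refine Finset.sum_le_sum fun p _ => ?_
        by_cases hp : p.1 < p.2
        · simpa [hp] using step2 p hp
        · simp [hp]
    _ = totalWeight w * L := by
        rw [← Finset.sum_mul, ← Finset.sum_filter, sum_pairs]

theorem cutTri_rescale (wHat : Sym2 V → ℝ) (hwHat : ∀ e, 0 ≤ wHat e)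
    (hW : 0 < totalWeight wHat) (Y : ℝ) (hY0 : 0 ≤ Y) (hY1 : Y ≤ totalWeight wHat)
    (wBar : Sym2 V → ℝ)
    (hwBar : wBar = fun e => ((totalWeight wHat + Y) / totalWeight wHat) * wHat e)
    (S T : Finset V) (hST : Disjoint S T) :
    cutTri wHat S T ≤ cutTri wBar S T ∧
      cutTri wBar S T ≤ cutTri wHat S T + 7 * Y * ell3 wBar := by
  classical
  letI : LinearOrder V := LinearOrder.lift' (Fintype.equivFin V) (Fintype.equivFin V).injective
  set W := totalWeight wHat with hWdef
  set c := (W + Y) / W with hc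
  have hc1 : 1 ≤ c := by rw [hc]; rw [le_div_iff₀ hW]; linarith
  have hc2 : c ≤ 2 := by rw [hc]; rw [div_le_iff₀ hW]; linarith
  have hcW : c * W = W + Y := by rw [hc]; field_simp
  -- Nonempty V
  have hne : Nonempty V := by
    by_contra h
    rw [not_nonempty_iff] at h
    have : W = 0 := by
      rw [hWdef, totalWeight]
      apply Finset.sum_eq_zero
      intro e _
      induction e with
      | _ x y => exact (h.false x).elim
    linarith
  haveI := hne
  have hwBar' : ∀ e, 0 ≤ wBar e := by
    intro e; rw [hwBar]
    exact mul_nonneg (by positivity) (hwHat e)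
  -- scaling of cutTri
  have hscale : cutTri wBar S T = c ^ 3 * cutTri wHat S T := by
    rw [cutTri, cutTri, Finset.mul_sum]
    refine Finset.sum_congr rfl fun t ht => ?_
    rw [Finset.mem_filter, Finset.mem_powersetCard_univ] at ht
    obtain ⟨a, b, c', h1, h2, -, hset⟩ := exists_sorted_triple ht.1
    rw [hset, triWeight_eq wBar h1.ne (h1.trans h2).ne h2.ne,
      triWeight_eq wHat h1.ne (h1.trans h2).ne h2.ne, hwBar]
    ring
  -- the key bound
  set L := ell3 wBar with hL
  have hL0 : 0 ≤ L := ell3_nonneg wBar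
  have hpair : ∀ a b : V, a ≠ b →
      ∑ s ∈ ({a, b} : Finset V)ᶜ, wHat s(a, s) * wHat s(b, s) ≤ L := by
    intro a b hab
    refine le_trans ?_ (pairSum_le_ell3 (w := wBar) hab)
    refine Finset.sum_le_sum fun s _ => ?_
    rw [hwBar]
    simp only
    have h1 := hwHat s(a, s); have h2 := hwHat s(b, s)
    nlinarith [mul_nonneg (mul_nonneg (sub_nonneg.mpr hc1)
      (show (0:ℝ) ≤ c + 1 by linarith)) (mul_nonneg h1 h2)]
  have hCW : cutTri wHat S T ≤ W * L := by
    refine le_trans ?_ (sum_triWeight_le hwHat hL0 hpair)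
    rw [cutTri]
    exact Finset.sum_le_sum_of_subset_of_nonneg (Finset.filter_subset _ _)
      (fun t _ _ => triWeight_nonneg hwHat t)
  have hC0 : 0 ≤ cutTri wHat S T := cutTri_nonneg hwHat S T
  have hc0 : (0:ℝ) ≤ c := le_trans zero_le_one hc1
  have h3 : 0 ≤ c ^ 3 - 1 := by
    nlinarith [mul_nonneg (sub_nonneg.mpr hc1)
      (show (0:ℝ) ≤ c ^ 2 + c + 1 by nlinarith [sq_nonneg c])]
  constructor
  · rw [hscale]
    nlinarith [mul_nonneg h3 hC0]
  · rw [hscale]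
    have key : (c ^ 3 - 1) * cutTri wHat S T ≤ 7 * Y * L := by
      have h1 : c ^ 3 - 1 ≤ 7 * (c - 1) := by
        nlinarith [mul_nonneg (mul_nonneg (sub_nonneg.mpr hc1) (sub_nonneg.mpr hc2))
          (show (0:ℝ) ≤ c + 3 by linarith)]
      have h2 : (c - 1) * W = Y := by linear_combination hcW
      calc (c ^ 3 - 1) * cutTri wHat S T ≤ (c ^ 3 - 1) * (W * L) :=
            mul_le_mul_of_nonneg_left hCW h3
        _ ≤ 7 * (c - 1) * (W * L) :=
            mul_le_mul_of_nonneg_right h1 (mul_nonneg hW.le hL0)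
        _ = 7 * Y * L := by rw [mul_assoc, ← mul_assoc (c-1), h2]; ring
    linarith
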